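/- Let 𝒲 be a reduced cyclic word and (P,Q) ∈ 𝕃ℙ₁(𝒲). Then δ₁(P,Q) and δ₂(P,Q) are non-empty reduced cyclic words. -/

import Mathlib

open List

namespace CyclicWords

/-- A letter of the alphabet `𝔸ₙ = {a₁,…,aₙ, ā₁,…,āₙ}`: a generator index together
with a Boolean recording whether the letter is barred. -/
abbrev Letter (n : ℕ) := Bool × Fin n

/-- The involution `x ↦ x̄` on letters. -/
def Letter.bar {n : ℕ} (x : Letter n) : Letter n := (!x.1, x.2)

/-- A linear word: a finite sequence of letters. -/
abbrev Word (n : ℕ) := List (Letter n)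

/-- `W̄ = x̄ₘ ⋯ x̄₁ x̄₀` for `W = x₀x₁⋯xₘ`. -/
def Word.bar {n : ℕ} (W : Word n) : Word n := (W.map Letter.bar).reverse

/-- `Wᵏ`, the concatenation of `k` copies of `W`. -/
def wpow {n : ℕ} (W : Word n) (k : ℕ) : Word n := (List.replicate k W).flatten

/-- A linear word is freely reduced when consecutive letters are never inverse
to each other. -/
def FreelyReduced {n : ℕ} (W : Word n) : Prop :=
  W.Chain' (fun a b => b ≠ Letter.bar a)

/-- A cyclic word: an equivalence class of linear words under cyclic rotation. -/
abbrev CWord (n : ℕ) := Cycle (Letter n)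

/-- `c(W)`, the cyclic word represented by the linear word `W`. -/
def cyc {n : ℕ} (W : Word n) : CWord n := ↑W

/-- The length of a cyclic word. -/
def clen {n : ℕ} (𝒲 : CWord n) : ℕ := 𝒲.length

/-- A cyclic word is reduced if it is non-empty and all of its linear
representatives are freely reduced. -/
def CReduced {n : ℕ} (𝒲 : CWord n) : Prop :=
  𝒲 ≠ Cycle.nil ∧ ∀ W : Word n, cyc W = 𝒲 → FreelyReduced W

/-- `P` is a (linear) subword of the cyclic word `𝒲`, i.e. a linear subword of
one of its linear representatives. -/
def Subword {n : ℕ} (P : Word n) (𝒲 : CWord n) : Prop :=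
  ∃ W : Word n, cyc W = 𝒲 ∧ P <:+: W

/-- `P` is a subword of the power `𝒲ʲ`. -/
def SubwordPow {n : ℕ} (P : Word n) (𝒲 : CWord n) (j : ℕ) : Prop :=
  ∃ W : Word n, cyc W = 𝒲 ∧ P <:+: wpow W j

/-- A surface symbol: a reduced cyclic word in which every letter of `𝔸ₙ`
appears exactly once. -/
def SurfaceSymbol {n : ℕ} (𝒪 : CWord n) : Prop :=
  CReduced 𝒪 ∧ ∃ O : Word n, cyc O = 𝒪 ∧ O.Nodup ∧ ∀ x : Letter n, x ∈ O

/-- `𝒲` is reduced and its (distinct) letters embed into `𝒪` preserving the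
cyclic order. -/
def OrientPos {n : ℕ} (𝒪 𝒲 : CWord n) : Prop :=
  CReduced 𝒲 ∧ ∃ W O : Word n, cyc W = 𝒲 ∧ cyc O = 𝒪 ∧ W.Sublist O

/-- `𝒲` is reduced and its (distinct) letters embed into `𝒪` reversing the
cyclic order. -/
def OrientNeg {n : ℕ} (𝒪 𝒲 : CWord n) : Prop :=
  CReduced 𝒲 ∧ ∃ W O : Word n, cyc W = 𝒲 ∧ cyc O = 𝒪 ∧ W.Sublist O.reverse

open Classical in
/-- The number `o(𝒲) ∈ {-1,0,1}` associated to a cyclic word `𝒲`. -/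
noncomputable def o {n : ℕ} (𝒪 𝒲 : CWord n) : ℤ :=
  if OrientPos 𝒪 𝒲 then 1 else if OrientNeg 𝒪 𝒲 then -1 else 0

/-- Condition (1) of the definition of `𝒪`-linked pairs. -/
def LinkedType1 {n : ℕ} (𝒪 : CWord n) (P Q : Word n) : Prop :=
  ∃ p₁ p₂ q₁ q₂ : Letter n, P = [p₁, p₂] ∧ Q = [q₁, q₂] ∧
    o 𝒪 (cyc [Letter.bar p₁, Letter.bar q₁, p₂, q₂]) ≠ 0

/-- Condition (2) of the definition of `𝒪`-linked pairs (`x₁`, `x₂` denote the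
first and last letters of `Y`). -/
def LinkedType2 {n : ℕ} (𝒪 : CWord n) (P Q : Word n) : Prop :=
  ∃ (p₁ p₂ q₁ q₂ : Letter n) (Y : Word n), Y ≠ [] ∧
    P = p₁ :: Y ++ [p₂] ∧ Q = q₁ :: Y ++ [q₂] ∧ p₁ ≠ q₁ ∧ p₂ ≠ q₂ ∧
    ∀ x₁ x₂ : Letter n, Y.head? = some x₁ → Y.getLast? = some x₂ →
      o 𝒪 (cyc [Letter.bar p₁, Letter.bar q₁, x₁]) = o 𝒪 (cyc [p₂, q₂, Letter.bar x₂])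

/-- Condition (3) of the definition of `𝒪`-linked pairs. -/
def LinkedType3 {n : ℕ} (𝒪 : CWord n) (P Q : Word n) : Prop :=
  ∃ (p₁ p₂ q₁ q₂ : Letter n) (Y : Word n), Y ≠ [] ∧
    P = p₁ :: Y ++ [p₂] ∧ Q = q₁ :: Word.bar Y ++ [q₂] ∧
    p₁ ≠ Letter.bar q₂ ∧ p₂ ≠ Letter.bar q₁ ∧
    ∀ x₁ x₂ : Letter n, Y.head? = some x₁ → Y.getLast? = some x₂ →
      o 𝒪 (cyc [q₂, Letter.bar p₁, x₁]) = o 𝒪 (cyc [Letter.bar q₁, p₂, Letter.bar x₂])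

/-- The ordered pair `(P,Q)` is `𝒪`-linked. -/
def IsLinked {n : ℕ} (𝒪 : CWord n) (P Q : Word n) : Prop :=
  FreelyReduced P ∧ FreelyReduced Q ∧ 2 ≤ P.length ∧ 2 ≤ Q.length ∧
    (LinkedType1 𝒪 P Q ∨ LinkedType2 𝒪 P Q ∨ LinkedType3 𝒪 P Q)

open Classical in
/-- The sign of a linked pair `(P,Q)`. -/
noncomputable def sign {n : ℕ} (𝒪 : CWord n) (P Q : Word n) : ℤ :=
  match P, Q with
  | p₁ :: ps, q₁ :: qs =>
    match ps.getLast?, qs.getLast?, ps.head? with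
    | some p₂, some q₂, some x₁ =>
      if LinkedType1 𝒪 (p₁ :: ps) (q₁ :: qs) then
        o 𝒪 (cyc [Letter.bar p₁, Letter.bar q₁, p₂, q₂])
      else if LinkedType2 𝒪 (p₁ :: ps) (q₁ :: qs) then
        o 𝒪 (cyc [Letter.bar p₁, Letter.bar q₁, x₁])
      else if LinkedType3 𝒪 (p₁ :: ps) (q₁ :: qs) then
        o 𝒪 (cyc [q₂, Letter.bar p₁, x₁])
      else 0
    | _, _, _ => 0
  | _, _ => 0

/-- `𝕃ℙ₁(𝒲)`: `(P,Q)` is an `𝒪`-linked pair of subwords of `𝒲`. -/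
def LP1 {n : ℕ} (𝒪 𝒲 : CWord n) (P Q : Word n) : Prop :=
  IsLinked 𝒪 P Q ∧ Subword P 𝒲 ∧ Subword Q 𝒲

/-- `𝕃ℙ₂(𝒱,𝒲)`: `(P,Q)` is an `𝒪`-linked pair with `P` a subword of `𝒱ʲ`,
`Q` a subword of `𝒲ᵏ` in the appropriate length windows. -/
def LP2 {n : ℕ} (𝒪 𝒱 𝒲 : CWord n) (P Q : Word n) : Prop :=
  IsLinked 𝒪 P Q ∧
    ∃ j k : ℕ, 0 < j ∧ 0 < k ∧ SubwordPow P 𝒱 j ∧ SubwordPow Q 𝒲 k ∧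
      (j - 1) * clen 𝒱 < P.length ∧ P.length ≤ j * clen 𝒱 ∧
      (k - 1) * clen 𝒲 < Q.length ∧ Q.length ≤ k * clen 𝒲

/-- The cut data for `δ` when `(P,Q)` has type (1) or (2): two cuts of `𝒲`
producing `W₁` (starting at the occurrence of `p₂`, the last letter of `P`) and
`W₂` (starting at the occurrence of `q₂`, the last letter of `Q`). -/
def DeltaPair12 {n : ℕ} (𝒪 𝒲 : CWord n) (P Q W₁ W₂ : Word n) : Prop :=
  (LinkedType1 𝒪 P Q ∨ LinkedType2 𝒪 P Q) ∧
  𝒲 = cyc (W₁ ++ W₂) ∧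
  (∃ (P' : Word n) (p₂ : Letter n), P = P' ++ [p₂] ∧ W₁.head? = some p₂ ∧
      P' <:+ W₁ ++ W₂) ∧
  (∃ (Q' : Word n) (q₂ : Letter n), Q = Q' ++ [q₂] ∧ W₂.head? = some q₂ ∧
      Q' <:+ W₂ ++ W₁)

/-- The cut data for `δ` when `(P,Q)` has type (3): `W₁` runs from `p₂` to
`q₁`, and `W₂` from `q₂` to `p₁`. -/
def DeltaPair3 {n : ℕ} (𝒪 𝒲 : CWord n) (P Q W₁ W₂ : Word n) : Prop :=
  LinkedType3 𝒪 P Q ∧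
  ∃ (p₁ p₂ q₁ q₂ : Letter n) (Y Y' : Word n), Y ≠ [] ∧ Y' ≠ [] ∧
    P = p₁ :: Y ++ [p₂] ∧ Q = q₁ :: Y' ++ [q₂] ∧
    W₁.head? = some p₂ ∧ W₁.getLast? = some q₁ ∧
    W₂.head? = some q₂ ∧ W₂.getLast? = some p₁ ∧
    𝒲 = cyc (W₁ ++ Y' ++ W₂ ++ Y)

/-- The words `W₁`, `W₂` obtained by cutting `𝒲` along the linked pair `(P,Q)`. -/
def DeltaPair {n : ℕ} (𝒪 𝒲 : CWord n) (P Q W₁ W₂ : Word n) : Prop :=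
  DeltaPair12 𝒪 𝒲 P Q W₁ W₂ ∨ DeltaPair3 𝒪 𝒲 P Q W₁ W₂

open Classical in
/-- A choice of the pair of linear words obtained by cutting `𝒲` along `(P,Q)`. -/
noncomputable def deltaW {n : ℕ} (𝒪 𝒲 : CWord n) (P Q : Word n) : Word n × Word n :=
  if h : ∃ W : Word n × Word n, DeltaPair 𝒪 𝒲 P Q W.1 W.2 then h.choose else ([], [])

/-- The cyclic word `δ₁(P,Q)`. -/
noncomputable def delta1 {n : ℕ} (𝒪 𝒲 : CWord n) (P Q : Word n) : CWord n :=
  cyc (deltaW 𝒪 𝒲 P Q).1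

/-- The cyclic word `δ₂(P,Q)`. -/
noncomputable def delta2 {n : ℕ} (𝒪 𝒲 : CWord n) (P Q : Word n) : CWord n :=
  cyc (deltaW 𝒪 𝒲 P Q).2

/-- `W₁` is the linear representative of `↑W₁` obtained by cutting immediately
before (the occurrence of) the last letter of `P`: `P` occurs (in a power)
ending exactly at the cut. -/
def CutEnds {n : ℕ} (W₁ P : Word n) : Prop :=
  ∃ (P' : Word n) (p₂ : Letter n) (j : ℕ),
    P = P' ++ [p₂] ∧ W₁.head? = some p₂ ∧ P' <:+ wpow W₁ j

/-- The data for `γ(P,Q)` when `(P,Q) ∈ 𝕃ℙ₂(𝒱,𝒲)` has type (1) or (2):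
`γ(P,Q) = c(V₁W₁)` where `V₁`, `W₁` are the representatives of `𝒱`, `𝒲` obtained
by cutting immediately before `p₂`, resp. `q₂`. -/
def GammaPair12 {n : ℕ} (𝒪 𝒱 𝒲 : CWord n) (P Q : Word n) (G : CWord n) : Prop :=
  (LinkedType1 𝒪 P Q ∨ LinkedType2 𝒪 P Q) ∧
  ∃ V₁ W₁ : Word n, cyc V₁ = 𝒱 ∧ cyc W₁ = 𝒲 ∧ CutEnds V₁ P ∧ CutEnds W₁ Q ∧
    G = cyc (V₁ ++ W₁)

/-- The data for `γ(P,Q)` when `(P,Q) ∈ 𝕃ℙ₂(𝒱,𝒲)` has type (3):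
`V₁` is the subword of `𝒱` starting right after the end of `Y` and ending right
before the first letter of `Y` (whose footprint in `𝒱` is the arc `U`), and
similarly `W₁` for `Ȳ` in `𝒲`; then `γ(P,Q) = c(V₁W₁)`. -/
def GammaPair3 {n : ℕ} (𝒪 𝒱 𝒲 : CWord n) (P Q : Word n) (G : CWord n) : Prop :=
  LinkedType3 𝒪 P Q ∧
  ∃ (p₁ p₂ q₁ q₂ : Letter n) (Y V₁ W₁ U U' : Word n) (j k : ℕ),
    P = p₁ :: Y ++ [p₂] ∧ Q = q₁ :: Word.bar Y ++ [q₂] ∧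
    V₁.head? = some p₂ ∧ V₁.getLast? = some p₁ ∧
    W₁.head? = some q₂ ∧ W₁.getLast? = some q₁ ∧
    𝒱 = cyc (U ++ V₁) ∧ Y <+: wpow (U ++ V₁) j ∧ Y.length % clen 𝒱 = U.length ∧
    𝒲 = cyc (U' ++ W₁) ∧ Word.bar Y <+: wpow (U' ++ W₁) k ∧
      (Word.bar Y).length % clen 𝒲 = U'.length ∧
    G = cyc (V₁ ++ W₁)

/-- `G` is the cyclic word `γ(P,Q)` associated to `(P,Q) ∈ 𝕃ℙ₂(𝒱,𝒲)`. -/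
def GammaPair {n : ℕ} (𝒪 𝒱 𝒲 : CWord n) (P Q : Word n) (G : CWord n) : Prop :=
  GammaPair12 𝒪 𝒱 𝒲 P Q G ∨ GammaPair3 𝒪 𝒱 𝒲 P Q G

open Classical in
/-- A choice of the cyclic word `γ(P,Q)` for `(P,Q) ∈ 𝕃ℙ₂(𝒱,𝒲)`. -/
noncomputable def gamma {n : ℕ} (𝒪 𝒱 𝒲 : CWord n) (P Q : Word n) : CWord n :=
  if h : ∃ G : CWord n, GammaPair 𝒪 𝒱 𝒲 P Q G then h.choose else Cycle.nil

/-- The set of non-empty reduced cyclic words, the basis of `𝕍`. -/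
def RedCyc (n : ℕ) := {𝒲 : CWord n // CReduced 𝒲}

instance {n : ℕ} [NeZero n] : Inhabited (RedCyc n) :=
  ⟨⟨cyc [default], by
    constructor
    · intro h
      have h' : ([(default : Letter n)] : Word n) = [] := (Cycle.coe_eq_nil _).mp h
      simp at h'
    · intro W hW
      have h1 : W ~r [(default : Letter n)] := Cycle.coe_eq_coe.mp hW
      have h2 : W = [(default : Letter n)] := List.perm_singleton.mp h1.perm
      rw [h2]
      exact List.isChain_singleton _⟩⟩

open Classical in
/-- View a cyclic word as a basis element of `𝕍` (junk value if not reduced). -/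
noncomputable def toRed {n : ℕ} [NeZero n] (c : CWord n) : RedCyc n :=
  if h : CReduced c then ⟨c, h⟩ else default


section Machinery

variable {n : ℕ}

lemma Letter.bar_ne_self (x : Letter n) : Letter.bar x ≠ x := by
  intro h
  have := congrArg Prod.fst h
  simp [Letter.bar] at this

lemma Letter.bar_bar (x : Letter n) : Letter.bar (Letter.bar x) = x := by
  simp [Letter.bar]

lemma bar_eq_comm {x y : Letter n} (h : x = Letter.bar y) : y = Letter.bar x := by
  subst h; rw [Letter.bar_bar]

variable (W₀ : Word n) (h₀ : W₀ ≠ [])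

/-- The letter of `W₀` at cyclic position `k`. -/
def fI (k : ℕ) : Letter n :=
  W₀[k % W₀.length]'(Nat.mod_lt _ (List.length_pos_iff.mpr h₀))

/-- The window of length `l` starting at cyclic position `x`. -/
def win (x l : ℕ) : Word n := (List.range l).map fun t => fI W₀ h₀ (x + t)

@[simp] lemma length_win (x l : ℕ) : (win W₀ h₀ x l).length = l := by simp [win]

lemma getElem_win (x l t : ℕ) (h : t < (win W₀ h₀ x l).length) :
    (win W₀ h₀ x l)[t] = fI W₀ h₀ (x + t) := by
  simp [win]

lemma fI_congr {x y : ℕ} (h : x ≡ y [MOD W₀.length]) : fI W₀ h₀ x = fI W₀ h₀ y := by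
  have hxy : x % W₀.length = y % W₀.length := h
  simp only [fI, hxy]

lemma addm_mod (x : ℕ) : x + W₀.length ≡ x [MOD W₀.length] := by
  unfold Nat.ModEq
  rw [Nat.add_mod_right]

lemma fI_addm (x : ℕ) : fI W₀ h₀ (x + W₀.length) = fI W₀ h₀ x :=
  fI_congr W₀ h₀ (addm_mod W₀ x)

lemma win_congr {x y : ℕ} (l : ℕ) (h : x ≡ y [MOD W₀.length]) :
    win W₀ h₀ x l = win W₀ h₀ y l := by
  unfold win
  apply List.map_congr_left
  intro t _
  exact fI_congr W₀ h₀ (h.add_right t)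

lemma win_add (x a b : ℕ) :
    win W₀ h₀ x (a + b) = win W₀ h₀ x a ++ win W₀ h₀ (x + a) b := by
  unfold win
  rw [List.range_add, List.map_append, List.map_map]
  congr 1
  apply List.map_congr_left
  intro t _
  simp [Function.comp, Nat.add_assoc]

lemma win_one (x : ℕ) : win W₀ h₀ x 1 = [fI W₀ h₀ x] := by simp [win, List.range_succ]

lemma win_head? {l : ℕ} (hl : 0 < l) (x : ℕ) :
    (win W₀ h₀ x l).head? = some (fI W₀ h₀ x) := by
  obtain ⟨l', rfl⟩ : ∃ l', l = 1 + l' := ⟨l - 1, by omega⟩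
  rw [win_add, win_one]
  rfl

lemma win_getLast? {l : ℕ} (hl : 0 < l) (x : ℕ) :
    (win W₀ h₀ x l).getLast? = some (fI W₀ h₀ (x + (l - 1))) := by
  obtain ⟨l', rfl⟩ : ∃ l', l = l' + 1 := ⟨l - 1, by omega⟩
  rw [win_add, win_one, List.getLast?_concat]
  simp

lemma win_full (x : ℕ) : win W₀ h₀ x W₀.length = W₀.rotate x := by
  apply List.ext_getElem (by simp)
  intro i h1 h2
  rw [List.getElem_rotate, getElem_win]
  simp [fI, Nat.add_comm]

lemma cyc_win (x : ℕ) : cyc (win W₀ h₀ x W₀.length) = cyc W₀ := by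
  rw [win_full]
  exact Cycle.coe_eq_coe.mpr (List.IsRotated.forall W₀ x)

lemma subword_win {P : Word n} (h : Subword P (cyc W₀)) :
    ∃ I, P = win W₀ h₀ I P.length ∧ P.length ≤ W₀.length := by
  obtain ⟨W, hWc, hinf⟩ := h
  obtain ⟨A, B, rfl⟩ := hinf
  have hrot : W₀ ~r (A ++ P ++ B) := (Cycle.coe_eq_coe.mp hWc).symm
  obtain ⟨k, hk⟩ := hrot
  have hlen : W₀.length = A.length + (P.length + B.length) := by
    have := congrArg List.length hk
    simp at this
    omega
  have hwin : win W₀ h₀ k W₀.length = A ++ (P ++ B) := by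
    rw [win_full, hk]
    simp [List.append_assoc]
  rw [hlen, win_add] at hwin
  have h1 := (List.append_inj hwin.symm (by simp)).2
  rw [win_add] at h1
  have h2 := (List.append_inj h1 (by simp)).1
  exact ⟨k + A.length, h2, by omega⟩

end Machinery
section Machinery2

variable {n : ℕ} (W₀ : Word n) (h₀ : W₀ ≠ [])

lemma fI_red (hred : ∀ W : Word n, cyc W = cyc W₀ → FreelyReduced W) (k : ℕ) :
    fI W₀ h₀ (k + 1) ≠ Letter.bar (fI W₀ h₀ k) := by
  have hch : (win W₀ h₀ k W₀.length).Chain' (fun a b => b ≠ Letter.bar a) :=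
    hred _ (cyc_win W₀ h₀ k)
  have hm : 0 < W₀.length := List.length_pos_iff.mpr h₀
  rcases Nat.lt_or_ge 1 W₀.length with h2 | h2
  · have := List.isChain_iff_getElem.mp hch 0 (by simp; omega)
    simpa [List.get_eq_getElem, getElem_win] using this
  · have h1 : W₀.length = 1 := by omega
    have he : fI W₀ h₀ (k + 1) = fI W₀ h₀ k := by
      apply fI_congr
      unfold Nat.ModEq
      rw [h1]
      omega
    rw [he]
    exact fun hc => Letter.bar_ne_self _ hc.symm

lemma refl_contra (hred : ∀ W : Word n, cyc W = cyc W₀ → FreelyReduced W)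
    (x lo hi : ℕ) (hlh : lo ≤ hi)
    (hrel : ∀ a, lo ≤ a → a ≤ hi →
      fI W₀ h₀ (x + a) = Letter.bar (fI W₀ h₀ (x + (lo + hi - a)))) : False := by
  rcases Nat.even_or_odd (lo + hi) with he | ho
  · obtain ⟨c, hc⟩ := he
    have h1 := hrel c (by omega) (by omega)
    rw [show lo + hi - c = c by omega] at h1
    exact Letter.bar_ne_self _ h1.symm
  · obtain ⟨c, hc⟩ := ho
    have h1 := hrel c (by omega) (by omega)
    rw [show lo + hi - c = c + 1 by omega] at h1
    have h2 : fI W₀ h₀ (x + (c + 1)) = Letter.bar (fI W₀ h₀ (x + c)) := bar_eq_comm h1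
    rw [show x + (c + 1) = (x + c) + 1 by omega] at h2
    exact fI_red W₀ h₀ hred (x + c) h2

lemma creduced_build {L : Word n} (hL : L ≠ [])
    (h1 : FreelyReduced L)
    (h2 : ∀ a ∈ L.getLast?, ∀ b ∈ L.head?, b ≠ Letter.bar a) : CReduced (cyc L) := by
  refine ⟨fun hc => hL ((Cycle.coe_eq_nil L).mp hc), ?_⟩
  intro W hWc
  have hLr : L ~r W := (Cycle.coe_eq_coe.mp hWc).symm
  obtain ⟨k, rfl⟩ := hLr
  have hdd : (L ++ L).Chain' (fun a b => b ≠ Letter.bar a) :=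
    List.IsChain.append h1 h1 h2
  rw [← List.rotate_mod]
  have hk : k % L.length < L.length := Nat.mod_lt _ (List.length_pos_iff.mpr hL)
  rw [List.rotate_eq_drop_append_take hk.le]
  refine hdd.infix ⟨L.take (k % L.length), L.drop (k % L.length), ?_⟩
  simp only [List.append_assoc, List.take_append_drop]
  rw [← List.append_assoc, List.take_append_drop]

lemma nodup_of_o_ne_zero {𝒪 : CWord n} (h𝒪 : SurfaceSymbol 𝒪) {L : Word n}
    (h : o 𝒪 (cyc L) ≠ 0) : L.Nodup := by
  obtain ⟨-, O₀, hO₀c, hO₀nd, -⟩ := h𝒪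
  by_cases h1 : OrientPos 𝒪 (cyc L)
  · obtain ⟨-, W, O, hWc, hOc, hsub⟩ := h1
    have hro : O ~r O₀ := Cycle.coe_eq_coe.mp (show cyc O = cyc O₀ by rw [hOc, ← hO₀c])
    have hOnd : O.Nodup := hro.nodup_iff.mpr hO₀nd
    have hWnd : W.Nodup := hsub.nodup hOnd
    exact (Cycle.coe_eq_coe.mp hWc).nodup_iff.mp hWnd
  · by_cases h2 : OrientNeg 𝒪 (cyc L)
    · obtain ⟨-, W, O, hWc, hOc, hsub⟩ := h2
      have hro : O ~r O₀ := Cycle.coe_eq_coe.mp (show cyc O = cyc O₀ by rw [hOc, ← hO₀c])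
      have hOnd : O.reverse.Nodup := by
        rw [List.nodup_reverse]
        exact hro.nodup_iff.mpr hO₀nd
      have hWnd : W.Nodup := hsub.nodup hOnd
      exact (Cycle.coe_eq_coe.mp hWc).nodup_iff.mp hWnd
    · exfalso
      apply h
      simp [o, h1, h2]

lemma concat_inj' {α : Type*} {l l' : List α} {b b' : α}
    (h : l ++ [b] = l' ++ [b']) : l = l' ∧ b = b' := by
  have h1 := congrArg List.dropLast h
  have h2 := congrArg List.getLast? h
  simp only [List.dropLast_concat, List.getLast?_concat, Option.some.injEq] at h1 h2
  exact ⟨h1, h2⟩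

lemma getLast?_of_suffix {α : Type*} {l' l : List α} (h : l' <:+ l) (hne : l' ≠ []) :
    l.getLast? = l'.getLast? := by
  obtain ⟨t, rfl⟩ := h
  exact List.getLast?_append_of_ne_nil _ hne

lemma bar_ne_nil {Y : Word n} (h : Y ≠ []) : Word.bar Y ≠ [] := by
  simpa [Word.bar] using h

@[simp] lemma bar_length (Y : Word n) : (Word.bar Y).length = Y.length := by
  simp [Word.bar]

lemma getElem_eq_of_eq {α : Type*} {l l' : List α} (h : l = l') {t : ℕ} (ht : t < l.length) :
    l[t] = l'[t]'(h ▸ ht) := by subst h; rfl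

lemma bar_getElem (Y : Word n) (t : ℕ) (h : t < (Word.bar Y).length) :
    (Word.bar Y)[t] = Letter.bar (Y[Y.length - 1 - t]'(by simp at h; omega)) := by
  simp [Word.bar, List.getElem_reverse, List.getElem_map]

end Machinery2
section Construct12

variable {n : ℕ} (W₀ : Word n) (h₀ : W₀ ≠ [])

lemma construct12 {P Q : Word n} {I J : ℕ}
    (hPwin : P = win W₀ h₀ I P.length) (hQwin : Q = win W₀ h₀ J Q.length)
    (hlP : 2 ≤ P.length) (hlQ : 2 ≤ Q.length)
    (hPle : P.length ≤ W₀.length) (hQle : Q.length ≤ W₀.length)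
    (hne : (I + P.length - 1) % W₀.length ≠ (J + Q.length - 1) % W₀.length) :
    ∃ W₁ W₂ : Word n,
      cyc W₀ = cyc (W₁ ++ W₂) ∧
      (∃ (P' : Word n) (p₂ : Letter n), P = P' ++ [p₂] ∧ W₁.head? = some p₂ ∧
          P' <:+ W₁ ++ W₂) ∧
      (∃ (Q' : Word n) (q₂ : Letter n), Q = Q' ++ [q₂] ∧ W₂.head? = some q₂ ∧
          Q' <:+ W₂ ++ W₁) := by
  have hm0 : 0 < W₀.length := List.length_pos_iff.mpr h₀
  set m := W₀.length with hm
  set a := I + P.length - 1 with ha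
  set b := J + Q.length - 1 with hb
  set a' := a % m with ha'
  set b' := b % m with hb'
  have haa : a' < m := Nat.mod_lt _ hm0
  have hbb : b' < m := Nat.mod_lt _ hm0
  have hamod : a' ≡ a [MOD m] := Nat.mod_modEq a m
  have hbmod : b' ≡ b [MOD m] := Nat.mod_modEq b m
  set g := if a' ≤ b' then b' - a' else b' + m - a' with hgdef
  have hne' : a' ≠ b' := hne
  have hg1 : 1 ≤ g := by rw [hgdef]; split <;> omega
  have hgm : g < m := by rw [hgdef]; split <;> omega
  have hkey : a' + g = b' ∨ a' + g = b' + m := by rw [hgdef]; split <;> omega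
  have hag : a' + g ≡ b [MOD m] := by
    rcases hkey with hk | hk
    · rw [hk]; exact hbmod
    · rw [hk]; exact (addm_mod W₀ b').trans hbmod
  refine ⟨win W₀ h₀ a' g, win W₀ h₀ (a' + g) (m - g), ?_, ?_, ?_⟩
  · have hsplit : win W₀ h₀ a' g ++ win W₀ h₀ (a' + g) (m - g) = win W₀ h₀ a' m := by
      rw [← win_add]; congr 1; omega
    rw [hsplit, cyc_win]
  · refine ⟨win W₀ h₀ I (P.length - 1), fI W₀ h₀ a, ?_, ?_, ?_⟩
    · have h1 : [fI W₀ h₀ a] = win W₀ h₀ (I + (P.length - 1)) 1 := by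
        rw [win_one]; congr 2; omega
      rw [h1, ← win_add]
      rw [show P.length - 1 + 1 = P.length by omega]
      exact hPwin
    · rw [win_head? W₀ h₀ hg1]
      exact congrArg some (fI_congr W₀ h₀ hamod)
    · have key : win W₀ h₀ (a' + (m - (P.length - 1))) (P.length - 1)
          = win W₀ h₀ I (P.length - 1) := by
        apply win_congr
        have h1 : a' + (m - (P.length - 1)) ≡ a + (m - (P.length - 1)) [MOD m] :=
          hamod.add_right _
        rw [show a + (m - (P.length - 1)) = I + m by omega] at h1
        exact h1.trans (addm_mod W₀ I)
      refine ⟨win W₀ h₀ a' (m - (P.length - 1)), ?_⟩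
      rw [← key, ← win_add, ← win_add]
      congr 1
      omega
  · have hW21 : win W₀ h₀ (a' + g) (m - g) ++ win W₀ h₀ a' g = win W₀ h₀ (a' + g) m := by
      have h1 : win W₀ h₀ (a' + g + (m - g)) g = win W₀ h₀ a' g := by
        apply win_congr
        rw [show a' + g + (m - g) = a' + m by omega]
        exact addm_mod W₀ a'
      rw [← h1, ← win_add]
      congr 1
      omega
    refine ⟨win W₀ h₀ J (Q.length - 1), fI W₀ h₀ b, ?_, ?_, ?_⟩
    · have h1 : [fI W₀ h₀ b] = win W₀ h₀ (J + (Q.length - 1)) 1 := by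
        rw [win_one]; congr 2; omega
      rw [h1, ← win_add]
      rw [show Q.length - 1 + 1 = Q.length by omega]
      exact hQwin
    · rw [win_head? W₀ h₀ (by omega : 0 < m - g)]
      exact congrArg some (fI_congr W₀ h₀ hag)
    · have key : win W₀ h₀ (a' + g + (m - (Q.length - 1))) (Q.length - 1)
          = win W₀ h₀ J (Q.length - 1) := by
        apply win_congr
        have h1 : a' + g + (m - (Q.length - 1)) ≡ b + (m - (Q.length - 1)) [MOD m] :=
          hag.add_right _
        rw [show b + (m - (Q.length - 1)) = J + m by omega] at h1
        exact h1.trans (addm_mod W₀ J)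
      refine ⟨win W₀ h₀ (a' + g) (m - (Q.length - 1)), ?_⟩
      rw [← key, ← win_add, hW21]
      congr 1
      omega

end Construct12
section Construct3

variable {n : ℕ} (W₀ : Word n) (h₀ : W₀ ≠ [])

lemma construct3 (hred : ∀ W : Word n, cyc W = cyc W₀ → FreelyReduced W)
    {P Q : Word n} {p₁ p₂ q₁ q₂ : Letter n} {Y : Word n} {I J : ℕ}
    (hP3 : P = p₁ :: Y ++ [p₂]) (hQ3 : Q = q₁ :: Word.bar Y ++ [q₂])
    (hYne : Y ≠ []) (hne1 : p₁ ≠ Letter.bar q₂) (hne2 : p₂ ≠ Letter.bar q₁)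
    (hPwin : P = win W₀ h₀ I P.length) (hQwin : Q = win W₀ h₀ J Q.length)
    (hPle : P.length ≤ W₀.length) :
    ∃ W₁ W₂ : Word n,
      W₁.head? = some p₂ ∧ W₁.getLast? = some q₁ ∧
      W₂.head? = some q₂ ∧ W₂.getLast? = some p₁ ∧
      cyc W₀ = cyc (W₁ ++ Word.bar Y ++ W₂ ++ Y) := by
  have hm0 : 0 < W₀.length := List.length_pos_iff.mpr h₀
  set m := W₀.length with hm
  set ℓ := Y.length with hℓ
  have hℓ1 : 1 ≤ ℓ := by
    rw [hℓ]
    have := List.length_pos_iff.mpr hYne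
    omega
  have hPlen : P.length = ℓ + 2 := by
    rw [hP3]
    simp only [List.length_append, List.length_cons, List.length_singleton, List.length_nil]
    try omega
  have hQlen : Q.length = ℓ + 2 := by
    rw [hQ3]
    simp only [List.length_append, List.length_cons, List.length_singleton, List.length_nil, bar_length]
    try omega
  have hℓm : ℓ + 2 ≤ m := by omega
  -- decompose the occurrence of P
  have hPsplit : win W₀ h₀ I (ℓ + 2)
      = [fI W₀ h₀ I] ++ win W₀ h₀ (I + 1) ℓ ++ [fI W₀ h₀ (I + 1 + ℓ)] := by
    calc win W₀ h₀ I (ℓ + 2) = win W₀ h₀ I (1 + ℓ + 1) := by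
          rw [show ℓ + 2 = 1 + ℓ + 1 by omega]
      _ = win W₀ h₀ I (1 + ℓ) ++ win W₀ h₀ (I + (1 + ℓ)) 1 := win_add W₀ h₀ _ _ _
      _ = (win W₀ h₀ I 1 ++ win W₀ h₀ (I + 1) ℓ) ++ win W₀ h₀ (I + 1 + ℓ) 1 := by
          rw [win_add, show I + (1 + ℓ) = I + 1 + ℓ by omega]
      _ = [fI W₀ h₀ I] ++ win W₀ h₀ (I + 1) ℓ ++ [fI W₀ h₀ (I + 1 + ℓ)] := by
          rw [win_one, win_one]
  have hPeq : [p₁] ++ Y ++ [p₂]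
      = [fI W₀ h₀ I] ++ win W₀ h₀ (I + 1) ℓ ++ [fI W₀ h₀ (I + 1 + ℓ)] := by
    rw [← hPsplit, ← hPlen, ← hPwin, hP3]
    simp
  have hp₂ : p₂ = fI W₀ h₀ (I + 1 + ℓ) := (concat_inj' hPeq).2
  have hPeq1 : [p₁] ++ Y = [fI W₀ h₀ I] ++ win W₀ h₀ (I + 1) ℓ := (concat_inj' hPeq).1
  have hp₁ : p₁ = fI W₀ h₀ I := by
    have := congrArg List.head? hPeq1
    simpa using this
  have hYw : Y = win W₀ h₀ (I + 1) ℓ := by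
    have := congrArg List.tail hPeq1
    simpa using this
  -- decompose the occurrence of Q
  have hQsplit : win W₀ h₀ J (ℓ + 2)
      = [fI W₀ h₀ J] ++ win W₀ h₀ (J + 1) ℓ ++ [fI W₀ h₀ (J + 1 + ℓ)] := by
    calc win W₀ h₀ J (ℓ + 2) = win W₀ h₀ J (1 + ℓ + 1) := by
          rw [show ℓ + 2 = 1 + ℓ + 1 by omega]
      _ = win W₀ h₀ J (1 + ℓ) ++ win W₀ h₀ (J + (1 + ℓ)) 1 := win_add W₀ h₀ _ _ _
      _ = (win W₀ h₀ J 1 ++ win W₀ h₀ (J + 1) ℓ) ++ win W₀ h₀ (J + 1 + ℓ) 1 := by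
          rw [win_add, show J + (1 + ℓ) = J + 1 + ℓ by omega]
      _ = [fI W₀ h₀ J] ++ win W₀ h₀ (J + 1) ℓ ++ [fI W₀ h₀ (J + 1 + ℓ)] := by
          rw [win_one, win_one]
  have hQeq : [q₁] ++ Word.bar Y ++ [q₂]
      = [fI W₀ h₀ J] ++ win W₀ h₀ (J + 1) ℓ ++ [fI W₀ h₀ (J + 1 + ℓ)] := by
    rw [← hQsplit, ← hQlen, ← hQwin, hQ3]
    simp
  have hq₂ : q₂ = fI W₀ h₀ (J + 1 + ℓ) := (concat_inj' hQeq).2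
  have hQeq1 : [q₁] ++ Word.bar Y = [fI W₀ h₀ J] ++ win W₀ h₀ (J + 1) ℓ :=
    (concat_inj' hQeq).1
  have hq₁ : q₁ = fI W₀ h₀ J := by
    have := congrArg List.head? hQeq1
    simpa using this
  have hbarYw : Word.bar Y = win W₀ h₀ (J + 1) ℓ := by
    have := congrArg List.tail hQeq1
    simpa using this
  set i := (I + 1) % m with hi
  set j := (J + 1) % m with hj
  have hifact : i < m := Nat.mod_lt _ hm0
  have hjfact : j < m := Nat.mod_lt _ hm0
  have hieq : i ≡ I + 1 [MOD m] := Nat.mod_modEq _ m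
  have hjeq : j ≡ J + 1 [MOD m] := Nat.mod_modEq _ m
  -- the key reflection relation
  have R1 : ∀ t, t < ℓ → fI W₀ h₀ (j + t) = Letter.bar (fI W₀ h₀ (i + (ℓ - 1 - t))) := by
    intro t ht
    have e1 : fI W₀ h₀ (j + t) = fI W₀ h₀ (J + 1 + t) := fI_congr W₀ h₀ (hjeq.add_right t)
    have e2 : (win W₀ h₀ (J + 1) ℓ)[t]'(by simp [ht]) = fI W₀ h₀ (J + 1 + t) :=
      getElem_win W₀ h₀ _ _ _ _
    have e3 : (Word.bar Y)[t]'(by simp [hℓ] at ht ⊢; omega)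
        = (win W₀ h₀ (J + 1) ℓ)[t]'(by simp [ht]) :=
      getElem_eq_of_eq hbarYw _
    have e4 : (Word.bar Y)[t]'(by simp [hℓ] at ht ⊢; omega)
        = Letter.bar (Y[ℓ - 1 - t]'(by omega)) := by
      rw [bar_getElem]
    have e5 : Y[ℓ - 1 - t]'(by omega)
        = (win W₀ h₀ (I + 1) ℓ)[ℓ - 1 - t]'(by simp; omega) :=
      getElem_eq_of_eq hYw _
    have e6 : (win W₀ h₀ (I + 1) ℓ)[ℓ - 1 - t]'(by simp; omega)
        = fI W₀ h₀ (I + 1 + (ℓ - 1 - t)) := getElem_win W₀ h₀ _ _ _ _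
    have e7 : fI W₀ h₀ (I + 1 + (ℓ - 1 - t)) = fI W₀ h₀ (i + (ℓ - 1 - t)) :=
      (fI_congr W₀ h₀ (hieq.add_right (ℓ - 1 - t))).symm
    rw [e1, ← e2, ← e3, e4, e5, e6, e7]
  set d := if i ≤ j then j - i else j + m - i with hd
  have hdm : d < m := by rw [hd]; split <;> omega
  have hij : i + d = j ∨ i + d = j + m := by rw [hd]; split <;> omega
  have fIij : ∀ t, fI W₀ h₀ (i + d + t) = fI W₀ h₀ (j + t) := by
    intro t
    rcases hij with hh | hh
    · rw [hh]
    · rw [hh, show j + m + t = (j + t) + m by omega]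
      exact fI_addm W₀ h₀ (j + t)
  by_cases hA : d < ℓ
  · exfalso
    apply refl_contra W₀ h₀ hred i d (ℓ - 1) (by omega)
    intro c hc1 hc2
    rw [show d + (ℓ - 1) - c = ℓ - 1 - (c - d) by omega]
    have h1 : fI W₀ h₀ (i + c) = fI W₀ h₀ (j + (c - d)) := by
      rw [show i + c = i + d + (c - d) by omega]
      exact fIij _
    rw [h1]
    exact R1 (c - d) (by omega)
  by_cases hB : d = ℓ
  · exfalso
    apply hne2
    have h1 : fI W₀ h₀ (i + d) = fI W₀ h₀ j := by simpa using fIij 0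
    have h2 : fI W₀ h₀ j = Letter.bar (fI W₀ h₀ (i + (ℓ - 1))) := by
      simpa using R1 0 (by omega)
    have h3 : fI W₀ h₀ (i + (ℓ - 1)) = fI W₀ h₀ J := by
      apply fI_congr
      apply Nat.ModEq.add_right_cancel' 1
      rw [show i + (ℓ - 1) + 1 = i + d by omega]
      rcases hij with hh | hh
      · rw [hh]; exact hjeq
      · rw [hh]; exact (addm_mod W₀ j).trans hjeq
    rw [hp₂, hq₁]
    have h4 : fI W₀ h₀ (I + 1 + ℓ) = fI W₀ h₀ (i + ℓ) :=
      (fI_congr W₀ h₀ (hieq.add_right ℓ)).symm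
    rw [h4, show i + ℓ = i + d by omega, h1, h2, h3]
  by_cases hC : d + ℓ = m
  · exfalso
    apply hne1
    have hq₂' : q₂ = fI W₀ h₀ i := by
      rw [hq₂]
      have h1 : fI W₀ h₀ (J + 1 + ℓ) = fI W₀ h₀ (j + ℓ) :=
        (fI_congr W₀ h₀ (hjeq.add_right ℓ)).symm
      rw [h1]
      rcases hij with hh | hh
      · rw [show j + ℓ = i + m by omega]
        exact fI_addm W₀ h₀ i
      · rw [show j + ℓ = i by omega]
    have h2 : fI W₀ h₀ (j + (ℓ - 1)) = Letter.bar (fI W₀ h₀ i) := by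
      have := R1 (ℓ - 1) (by omega)
      rwa [show ℓ - 1 - (ℓ - 1) = 0 by omega, Nat.add_zero] at this
    have h3 : p₁ = fI W₀ h₀ (j + (ℓ - 1)) := by
      rw [hp₁]
      apply fI_congr
      apply Nat.ModEq.add_right_cancel' 1
      rw [show j + (ℓ - 1) + 1 = j + ℓ by omega]
      symm
      rcases hij with hh | hh
      · rw [show j + ℓ = i + m by omega]
        exact (addm_mod W₀ i).trans hieq
      · rw [show j + ℓ = i by omega]
        exact hieq
    rw [h3, h2, hq₂']
  by_cases hD : m < d + ℓ
  · exfalso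
    apply refl_contra W₀ h₀ hred i 0 (ℓ - 1 - (m - d)) (Nat.zero_le _)
    intro u hu0 hu1
    rw [show 0 + (ℓ - 1 - (m - d)) - u = ℓ - 1 - ((m - d) + u) by omega]
    have h1 : fI W₀ h₀ (i + u) = fI W₀ h₀ (j + ((m - d) + u)) := by
      rcases hij with hh | hh
      · rw [show j + ((m - d) + u) = (i + u) + m by omega]
        exact (fI_addm W₀ h₀ _).symm
      · rw [show j + ((m - d) + u) = i + u by omega]
    rw [h1]
    exact R1 ((m - d) + u) (by omega)
  -- the good case
  have hld : ℓ < d := by omega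
  have hdlm : d + ℓ < m := by omega
  refine ⟨win W₀ h₀ (i + ℓ) (d - ℓ), win W₀ h₀ (j + ℓ) (m - (d + ℓ)), ?_, ?_, ?_, ?_, ?_⟩
  · rw [win_head? W₀ h₀ (by omega)]
    refine congrArg some ?_
    rw [hp₂]
    exact fI_congr W₀ h₀ (hieq.add_right ℓ)
  · rw [win_getLast? W₀ h₀ (by omega)]
    refine congrArg some ?_
    rw [hq₁]
    apply fI_congr
    apply Nat.ModEq.add_right_cancel' 1
    rw [show i + ℓ + (d - ℓ - 1) + 1 = i + d by omega]
    rcases hij with hh | hh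
    · rw [hh]; exact hjeq
    · rw [hh]; exact (addm_mod W₀ j).trans hjeq
  · rw [win_head? W₀ h₀ (by omega)]
    refine congrArg some ?_
    rw [hq₂]
    exact fI_congr W₀ h₀ (hjeq.add_right ℓ)
  · rw [win_getLast? W₀ h₀ (by omega)]
    refine congrArg some ?_
    rw [hp₁]
    apply fI_congr
    apply Nat.ModEq.add_right_cancel' 1
    rw [show j + ℓ + (m - (d + ℓ) - 1) + 1 = j + (m - d) by omega]
    rcases hij with hh | hh
    · rw [show j + (m - d) = i + m by omega]
      exact (addm_mod W₀ i).trans hieq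
    · rw [show j + (m - d) = i by omega]
      exact hieq
  · -- the cyclic word equality
    have hbarY' : Word.bar Y = win W₀ h₀ (i + ℓ + (d - ℓ)) ℓ := by
      rw [hbarYw]
      symm
      apply win_congr
      rw [show i + ℓ + (d - ℓ) = i + d by omega]
      rcases hij with hh | hh
      · rw [hh]; exact hjeq
      · rw [hh]; exact (addm_mod W₀ j).trans hjeq
    have hjl : win W₀ h₀ (j + ℓ) (m - (d + ℓ))
        = win W₀ h₀ (i + ℓ + (d - ℓ) + ℓ) (m - (d + ℓ)) := by
      apply win_congr
      rw [show i + ℓ + (d - ℓ) + ℓ = i + d + ℓ by omega]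
      rcases hij with hh | hh
      · rw [hh]
      · rw [hh, show j + m + ℓ = (j + ℓ) + m by omega]
        exact (addm_mod W₀ (j + ℓ)).symm
    have hYlast : Y = win W₀ h₀ (i + ℓ + (d - ℓ) + ℓ + (m - (d + ℓ))) ℓ := by
      rw [hYw]
      symm
      apply win_congr
      rw [show i + ℓ + (d - ℓ) + ℓ + (m - (d + ℓ)) = i + m by omega]
      exact (addm_mod W₀ i).trans hieq
    have elist : win W₀ h₀ (i + ℓ) m
        = win W₀ h₀ (i + ℓ) (d - ℓ) ++ Word.bar Y ++ win W₀ h₀ (j + ℓ) (m - (d + ℓ)) ++ Y := by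
      rw [hbarY', hjl, hYlast]
      conv_lhs => rw [show m = (d - ℓ) + (ℓ + ((m - (d + ℓ)) + ℓ)) from by omega]
      rw [win_add, win_add, win_add]
      simp [List.append_assoc]
    rw [← elist, cyc_win]
end Construct3
section Soundness

variable {n : ℕ}

lemma deltaPair_reduced {𝒪 𝒲 : CWord n} (h𝒪 : SurfaceSymbol 𝒪) (hW : CReduced 𝒲)
    {P Q W₁ W₂ : Word n} (hfrP : FreelyReduced P) (hfrQ : FreelyReduced Q)
    (hD : DeltaPair 𝒪 𝒲 P Q W₁ W₂) :
    CReduced (cyc W₁) ∧ CReduced (cyc W₂) := by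
  rcases hD with ⟨h12, hWeq, ⟨P', p₂, hPd, hW1h, hPs⟩, ⟨Q', q₂, hQd, hW2h, hQs⟩⟩ |
    ⟨h3, p₁, p₂, q₁, q₂, Y, Y', hYne, hY'ne, hPd, hQd, hW1h, hW1l, hW2h, hW2l, hWeq⟩
  · -- types (1) and (2)
    have hW1ne : W₁ ≠ [] := by intro hc; rw [hc] at hW1h; simp at hW1h
    have hW2ne : W₂ ≠ [] := by intro hc; rw [hc] at hW2h; simp at hW2h
    have hbig : FreelyReduced (W₁ ++ W₂) := hW.2 _ hWeq.symm
    have hc1 : W₁.Chain' (fun a b => b ≠ Letter.bar a) :=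
      List.IsChain.prefix hbig (List.prefix_append _ _)
    have hc2 : W₂.Chain' (fun a b => b ≠ Letter.bar a) :=
      List.IsChain.suffix hbig (List.suffix_append _ _)
    rcases h12 with h1 | h2
    · -- type (1)
      obtain ⟨p₁', p₂', q₁', q₂', hP1, hQ1, ho⟩ := h1
      have hPc : P' ++ [p₂] = [p₁'] ++ [p₂'] := by rw [← hPd, hP1]; rfl
      obtain ⟨hP'e, hp₂e⟩ := concat_inj' hPc
      have hQc : Q' ++ [q₂] = [q₁'] ++ [q₂'] := by rw [← hQd, hQ1]; rfl
      obtain ⟨hQ'e, hq₂e⟩ := concat_inj' hQc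
      have hnd := nodup_of_o_ne_zero h𝒪 ho
      simp only [List.nodup_cons, List.mem_cons, List.mem_singleton, List.not_mem_nil,
        not_or, List.nodup_nil, and_true] at hnd
      have hW1last : W₁.getLast? = some q₁' := by
        rw [← List.getLast?_append_of_ne_nil W₂ hW1ne,
          getLast?_of_suffix hQs (by simp [hQ'e]), hQ'e]
        rfl
      have hW2last : W₂.getLast? = some p₁' := by
        rw [← List.getLast?_append_of_ne_nil W₁ hW2ne,
          getLast?_of_suffix hPs (by simp [hP'e]), hP'e]
        rfl
      constructor
      · refine creduced_build hW1ne hc1 ?_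
        intro a ha b hb
        rw [hW1last] at ha
        rw [hW1h] at hb
        simp only [Option.mem_def, Option.some.injEq] at ha hb
        subst ha; subst hb
        rw [hp₂e]
        intro hcon
        exact hnd.2.1.1 hcon.symm
      · refine creduced_build hW2ne hc2 ?_
        intro a ha b hb
        rw [hW2last] at ha
        rw [hW2h] at hb
        simp only [Option.mem_def, Option.some.injEq] at ha hb
        subst ha; subst hb
        rw [hq₂e]
        intro hcon
        exact hnd.1.2.2.1 hcon.symm
    · -- type (2)
      obtain ⟨p₁', p₂', q₁', q₂', Y, hYne, hP2, hQ2, hpq1, hpq2, -⟩ := h2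
      have hPc : P' ++ [p₂] = (p₁' :: Y) ++ [p₂'] := by rw [← hPd, hP2]
      obtain ⟨hP'e, hp₂e⟩ := concat_inj' hPc
      have hQc : Q' ++ [q₂] = (q₁' :: Y) ++ [q₂'] := by rw [← hQd, hQ2]
      obtain ⟨hQ'e, hq₂e⟩ := concat_inj' hQc
      obtain ⟨x₂, hx₂⟩ : ∃ x, Y.getLast? = some x := by
        cases hY : Y.getLast? with
        | none => exact absurd (List.getLast?_eq_none_iff.mp hY) hYne
        | some x => exact ⟨x, rfl⟩
      have hYcons : ∀ z : Letter n, (z :: Y).getLast? = some x₂ := by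
        intro z
        rw [show z :: Y = [z] ++ Y from rfl, List.getLast?_append_of_ne_nil _ hYne, hx₂]
      have hW1last : W₁.getLast? = some x₂ := by
        rw [← List.getLast?_append_of_ne_nil W₂ hW1ne,
          getLast?_of_suffix hQs (by simp [hQ'e]), hQ'e, hYcons]
      have hW2last : W₂.getLast? = some x₂ := by
        rw [← List.getLast?_append_of_ne_nil W₁ hW2ne,
          getLast?_of_suffix hPs (by simp [hP'e]), hP'e, hYcons]
      have hfrP' : ((p₁' :: Y) ++ [p₂']).Chain' (fun a b => b ≠ Letter.bar a) := by
        have he : P = (p₁' :: Y) ++ [p₂'] := by simp [hP2]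
        rw [he] at hfrP
        exact hfrP
      have hjP : p₂' ≠ Letter.bar x₂ := by
        have := (List.isChain_append.mp hfrP').2.2 x₂ (by rw [hYcons]; rfl) p₂' rfl
        exact this
      have hfrQ' : ((q₁' :: Y) ++ [q₂']).Chain' (fun a b => b ≠ Letter.bar a) := by
        have he : Q = (q₁' :: Y) ++ [q₂'] := by simp [hQ2]
        rw [he] at hfrQ
        exact hfrQ
      have hjQ : q₂' ≠ Letter.bar x₂ := by
        have := (List.isChain_append.mp hfrQ').2.2 x₂ (by rw [hYcons]; rfl) q₂' rfl
        exact this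
      constructor
      · refine creduced_build hW1ne hc1 ?_
        intro a ha b hb
        rw [hW1last] at ha
        rw [hW1h] at hb
        simp only [Option.mem_def, Option.some.injEq] at ha hb
        subst ha; subst hb
        rw [hp₂e]
        exact hjP
      · refine creduced_build hW2ne hc2 ?_
        intro a ha b hb
        rw [hW2last] at ha
        rw [hW2h] at hb
        simp only [Option.mem_def, Option.some.injEq] at ha hb
        subst ha; subst hb
        rw [hq₂e]
        exact hjQ
  · -- type (3)
    obtain ⟨p₁', p₂', q₁', q₂', Yq, hYqne, hP3, hQ3, hne1, hne2, -⟩ := h3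
    have hPc : p₁ :: (Y ++ [p₂]) = p₁' :: (Yq ++ [p₂']) := by
      rw [← List.cons_append, ← hPd, hP3, List.cons_append]
    have hp₁e : p₁ = p₁' := (List.cons_eq_cons.mp hPc).1
    have hp₂e : p₂ = p₂' := (concat_inj' (List.cons_eq_cons.mp hPc).2).2
    have hQc : q₁ :: (Y' ++ [q₂]) = q₁' :: (Word.bar Yq ++ [q₂']) := by
      rw [← List.cons_append, ← hQd, hQ3, List.cons_append]
    have hq₁e : q₁ = q₁' := (List.cons_eq_cons.mp hQc).1
    have hq₂e : q₂ = q₂' := (concat_inj' (List.cons_eq_cons.mp hQc).2).2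
    have hW1ne : W₁ ≠ [] := by intro hc; rw [hc] at hW1h; simp at hW1h
    have hW2ne : W₂ ≠ [] := by intro hc; rw [hc] at hW2h; simp at hW2h
    have hbig : FreelyReduced (W₁ ++ Y' ++ W₂ ++ Y) := hW.2 _ hWeq.symm
    have hc1 : W₁.Chain' (fun a b => b ≠ Letter.bar a) :=
      List.IsChain.infix hbig ⟨[], Y' ++ (W₂ ++ Y), by simp [List.append_assoc]⟩
    have hc2 : W₂.Chain' (fun a b => b ≠ Letter.bar a) :=
      List.IsChain.infix hbig ⟨W₁ ++ Y', Y, by simp [List.append_assoc]⟩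
    constructor
    · refine creduced_build hW1ne hc1 ?_
      intro a ha b hb
      rw [hW1l] at ha
      rw [hW1h] at hb
      simp only [Option.mem_def, Option.some.injEq] at ha hb
      subst ha; subst hb
      rw [hp₂e, hq₁e]
      exact hne2
    · refine creduced_build hW2ne hc2 ?_
      intro a ha b hb
      rw [hW2l] at ha
      rw [hW2h] at hb
      simp only [Option.mem_def, Option.some.injEq] at ha hb
      subst ha; subst hb
      intro hcon
      apply hne1
      rw [← hp₁e, ← hq₂e]
      exact bar_eq_comm hcon
end Soundness
section Existence

variable {n : ℕ}

lemma deltaPair_exists {𝒪 𝒲 : CWord n} (h𝒪 : SurfaceSymbol 𝒪) (hW : CReduced 𝒲)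
    {P Q : Word n} (h : LP1 𝒪 𝒲 P Q) :
    ∃ W : Word n × Word n, DeltaPair 𝒪 𝒲 P Q W.1 W.2 := by
  obtain ⟨⟨hfrP, hfrQ, hlP, hlQ, hlink⟩, hsubP, hsubQ⟩ := h
  obtain ⟨W₀, hW₀c⟩ := Quotient.exists_rep 𝒲
  have hW₀c' : cyc W₀ = 𝒲 := hW₀c
  subst hW₀c'
  have h₀ : W₀ ≠ [] := by
    intro hc
    subst hc
    exact hW.1 ((Cycle.coe_eq_nil _).mpr rfl)
  have hred : ∀ W : Word n, cyc W = cyc W₀ → FreelyReduced W := fun W hw => hW.2 W hw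
  obtain ⟨I, hPwin, hPle⟩ := subword_win W₀ h₀ hsubP
  obtain ⟨J, hQwin, hQle⟩ := subword_win W₀ h₀ hsubQ
  have hm0 : 0 < W₀.length := List.length_pos_iff.mpr h₀
  rcases hlink with h1 | h2 | h3
  · -- type (1)
    obtain ⟨p₁, p₂, q₁, q₂, hP1, hQ1, ho⟩ := h1
    have hlPe : P.length = 2 := by rw [hP1]; rfl
    have hlQe : Q.length = 2 := by rw [hQ1]; rfl
    have hne : (I + P.length - 1) % W₀.length ≠ (J + Q.length - 1) % W₀.length := by
      intro hc
      have hIJ : I ≡ J [MOD W₀.length] := by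
        apply Nat.ModEq.add_right_cancel' 1
        rw [hlPe, hlQe] at hc
        rw [show I + 2 - 1 = I + 1 by omega, show J + 2 - 1 = J + 1 by omega] at hc
        exact hc
      have hp₁ : p₁ = fI W₀ h₀ I ∧ p₂ = fI W₀ h₀ (I + 1) := by
        have he : [p₁, p₂] = win W₀ h₀ I 2 := by rw [← hP1, hPwin, hlPe]
        rw [show win W₀ h₀ I 2 = [fI W₀ h₀ (I + 0), fI W₀ h₀ (I + 1)] from by
          simp [win, List.range_succ]] at he
        simpa using he
      have hq₁ : q₁ = fI W₀ h₀ J ∧ q₂ = fI W₀ h₀ (J + 1) := by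
        have he : [q₁, q₂] = win W₀ h₀ J 2 := by rw [← hQ1, hQwin, hlQe]
        rw [show win W₀ h₀ J 2 = [fI W₀ h₀ (J + 0), fI W₀ h₀ (J + 1)] from by
          simp [win, List.range_succ]] at he
        simpa using he
      have hpq : p₁ = q₁ := by
        rw [hp₁.1, hq₁.1]
        exact fI_congr W₀ h₀ hIJ
      have hnd := nodup_of_o_ne_zero h𝒪 ho
      rw [hpq] at hnd
      simp at hnd
    obtain ⟨W₁, W₂, hc, hPdat, hQdat⟩ :=
      construct12 W₀ h₀ hPwin hQwin (by omega) (by omega) hPle hQle hne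
    exact ⟨(W₁, W₂), Or.inl ⟨Or.inl ⟨p₁, p₂, q₁, q₂, hP1, hQ1, ho⟩, hc, hPdat, hQdat⟩⟩
  · -- type (2)
    obtain ⟨p₁, p₂, q₁, q₂, Y, hYne, hP2, hQ2, hpq1, hpq2, ho⟩ := h2
    have hlPe : P.length = Y.length + 2 := by
      rw [hP2]
      simp only [List.length_append, List.length_cons, List.length_singleton, List.length_nil]
      try omega
    have hlQe : Q.length = Y.length + 2 := by
      rw [hQ2]
      simp only [List.length_append, List.length_cons, List.length_singleton, List.length_nil]
      try omega
    have hne : (I + P.length - 1) % W₀.length ≠ (J + Q.length - 1) % W₀.length := by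
      intro hc
      have hIJ : I ≡ J [MOD W₀.length] := by
        apply Nat.ModEq.add_right_cancel' (Y.length + 1)
        rw [hlPe, hlQe] at hc
        rw [show I + (Y.length + 2) - 1 = I + (Y.length + 1) by omega,
          show J + (Y.length + 2) - 1 = J + (Y.length + 1) by omega] at hc
        exact hc
      have hPQ : P = Q := by
        rw [hPwin, hQwin, hlPe, hlQe]
        exact win_congr W₀ h₀ _ hIJ
      rw [hP2, hQ2] at hPQ
      exact hpq1 (List.cons_eq_cons.mp hPQ).1
    obtain ⟨W₁, W₂, hc, hPdat, hQdat⟩ :=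
      construct12 W₀ h₀ hPwin hQwin (by omega) (by omega) hPle hQle hne
    exact ⟨(W₁, W₂),
      Or.inl ⟨Or.inr ⟨p₁, p₂, q₁, q₂, Y, hYne, hP2, hQ2, hpq1, hpq2, ho⟩, hc, hPdat, hQdat⟩⟩
  · -- type (3)
    obtain ⟨p₁, p₂, q₁, q₂, Y, hYne, hP3, hQ3, hne1, hne2, ho⟩ := h3
    obtain ⟨W₁, W₂, hh1, hl1, hh2, hl2, hcy⟩ :=
      construct3 W₀ h₀ hred hP3 hQ3 hYne hne1 hne2 hPwin hQwin hPle
    exact ⟨(W₁, W₂),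
      Or.inr ⟨⟨p₁, p₂, q₁, q₂, Y, hYne, hP3, hQ3, hne1, hne2, ho⟩,
        p₁, p₂, q₁, q₂, Y, Word.bar Y, hYne, bar_ne_nil hYne, hP3, hQ3,
        hh1, hl1, hh2, hl2, hcy⟩⟩

end Existence
/-- For `(P,Q) ∈ 𝕃ℙ₁(𝒲)`, the cyclic words `δ₁(P,Q)` and
`δ₂(P,Q)` are non-empty and reduced. -/
theorem delta_reduced (n : ℕ) (𝒪 : CWord n) (h𝒪 : SurfaceSymbol 𝒪)
    (𝒲 : CWord n) (hW : CReduced 𝒲) (P Q : Word n) (h : LP1 𝒪 𝒲 P Q) :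
    delta1 𝒪 𝒲 P Q ≠ Cycle.nil ∧ delta2 𝒪 𝒲 P Q ≠ Cycle.nil ∧
      CReduced (delta1 𝒪 𝒲 P Q) ∧ CReduced (delta2 𝒪 𝒲 P Q) := by
  have hE : ∃ W : Word n × Word n, DeltaPair 𝒪 𝒲 P Q W.1 W.2 :=
    deltaPair_exists h𝒪 hW h
  have hspec := hE.choose_spec
  obtain ⟨hr1, hr2⟩ := deltaPair_reduced h𝒪 hW h.1.1 h.1.2.1 hspec
  have hdw : deltaW 𝒪 𝒲 P Q = hE.choose := by
    rw [deltaW, dif_pos hE]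
  have hd1 : delta1 𝒪 𝒲 P Q = cyc hE.choose.1 := by rw [delta1, hdw]
  have hd2 : delta2 𝒪 𝒲 P Q = cyc hE.choose.2 := by rw [delta2, hdw]
  rw [hd1, hd2]
  exact ⟨hr1.1, hr2.1, hr1, hr2⟩

end CyclicWords
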